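/- Let A be a unital C*-algebra, σ : Mₚ → A a unital *-homomorphism from the p×p matrix algebra, τ a tracial state on A, a ∈ σ(Mₚ), and b an element of A commuting with every element of σ(Mₚ). Then τ(ab) = τ(a)τ(b). -/

import Mathlib

open scoped ComplexOrder

open Matrix in
lemma tracial_functional_eq_trace_smul {p : ℕ} (hp : 0 < p)
    (φ : Matrix (Fin p) (Fin p) ℂ →ₗ[ℂ] ℂ)
    (h : ∀ m n, φ (m * n) = φ (n * m)) :
    ∀ m, φ m = m.trace * φ (single ⟨0, hp⟩ ⟨0, hp⟩ 1) := by
  set i0 : Fin p := ⟨0, hp⟩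
  have hdiag : ∀ i : Fin p, φ (single i i 1) = φ (single i0 i0 1) := by
    intro i
    have := h (single i i0 1) (single i0 i 1)
    rw [single_mul_single_same, single_mul_single_same, one_mul] at this
    exact this
  have hoff : ∀ i j : Fin p, i ≠ j → φ (single i j 1) = 0 := by
    intro i j hij
    have := h (single i j 1) (single j j 1)
    rw [single_mul_single_same, single_mul_single_of_ne (h := Ne.symm hij)] at this
    simpa using this
  intro m
  conv_lhs => rw [matrix_eq_sum_single m]
  have hsb : ∀ i j : Fin p, single i j (m i j) = m i j • single i j 1 := by
    intro i j; rw [smul_single, smul_eq_mul, mul_one]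
  simp_rw [map_sum, hsb, _root_.map_smul]
  calc ∑ i, ∑ j, m i j • φ (single i j 1)
      = ∑ i, ∑ j, (if j = i then m i i * φ (single i0 i0 1) else 0) := by
        refine Finset.sum_congr rfl fun i _ => Finset.sum_congr rfl fun j _ => ?_
        rcases eq_or_ne j i with rfl | hij
        · simp [hdiag j]
        · simp [hoff i j (Ne.symm hij), hij]
    _ = ∑ i, m i i * φ (single i0 i0 1) := by
        simp
    _ = m.trace * φ (single i0 i0 1) := by
        rw [Matrix.trace, Finset.sum_mul]; rfl

/-- If `σ : M_p → A` is a unital *-homomorphism, `τ` a tracial state,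
`a ∈ σ(M_p)` and `b` commutes with `σ(M_p)`, then `τ(ab) = τ(a)τ(b)`. -/
theorem trace_mul_eq_trace_mul_trace_of_matrix_subalgebra
    {A : Type*} [NormedRing A] [StarRing A] [CStarRing A]
    [NormedAlgebra ℂ A] [StarModule ℂ A] [CompleteSpace A]
    (p : ℕ) (hp : 0 < p)
    (σ : Matrix (Fin p) (Fin p) ℂ →⋆ₐ[ℂ] A)
    (τ : A →ₗ[ℂ] ℂ)
    (hτ1 : τ 1 = 1)
    (hτpos : ∀ x : A, 0 ≤ τ (star x * x))
    (hτtr : ∀ x y : A, τ (x * y) = τ (y * x))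
    (a b : A)
    (ha : a ∈ Set.range σ)
    (hb : ∀ m : Matrix (Fin p) (Fin p) ℂ, Commute (σ m) b) :
    τ (a * b) = τ a * τ b := by
  obtain ⟨m, rfl⟩ := ha
  -- φ₁ m = τ (σ m * b), φ₂ m = τ (σ m)
  let φ₁ : Matrix (Fin p) (Fin p) ℂ →ₗ[ℂ] ℂ :=
    { toFun := fun m => τ (σ m * b)
      map_add' := fun x y => by simp [add_mul]
      map_smul' := fun c x => by simp [smul_mul_assoc] }
  let φ₂ : Matrix (Fin p) (Fin p) ℂ →ₗ[ℂ] ℂ :=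
    { toFun := fun m => τ (σ m)
      map_add' := fun x y => by simp
      map_smul' := fun c x => by simp }
  have h1 : ∀ x y, φ₁ (x * y) = φ₁ (y * x) := by
    intro x y
    show τ (σ (x * y) * b) = τ (σ (y * x) * b)
    rw [map_mul σ x y, map_mul σ y x, mul_assoc, hτtr, mul_assoc, ← (hb x).eq, ← mul_assoc]
  have h2 : ∀ x y, φ₂ (x * y) = φ₂ (y * x) := by
    intro x y
    show τ (σ (x * y)) = τ (σ (y * x))
    rw [map_mul σ x y, map_mul σ y x, hτtr]
  have e1 := tracial_functional_eq_trace_smul hp φ₁ h1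
  have e2 := tracial_functional_eq_trace_smul hp φ₂ h2
  have t1 : φ₂ 1 = 1 := by
    show τ (σ 1) = 1
    rw [map_one, hτ1]
  have tr1 : (1 : Matrix (Fin p) (Fin p) ℂ).trace = (p : ℂ) := by
    simp [Matrix.trace]
  have hp' : (p : ℂ) ≠ 0 := Nat.cast_ne_zero.mpr hp.ne'
  have e2' : φ₂ (Matrix.single ⟨0, hp⟩ ⟨0, hp⟩ 1) = 1 / p := by
    have := e2 1
    rw [t1, tr1] at this
    field_simp
    linear_combination -this
  have e1' : φ₁ (Matrix.single ⟨0, hp⟩ ⟨0, hp⟩ 1) = τ b / p := by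
    have := e1 1
    rw [tr1] at this
    have t1' : φ₁ 1 = τ b := by
      show τ (σ 1 * b) = τ b
      rw [map_one, one_mul]
    rw [t1'] at this
    field_simp
    linear_combination -this
  calc τ (σ m * b) = φ₁ m := rfl
    _ = m.trace * (τ b / p) := by rw [e1 m, e1']
    _ = (m.trace * (1 / p)) * τ b := by ring
    _ = φ₂ m * τ b := by rw [e2 m, e2']
    _ = τ (σ m) * τ b := rfl
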